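/- Abstract logarithmic convexity (Hilbert-space form of the Escauriaza–Kenig–Ponce–Vega lemma): there exists a universal constant N ≥ 0 with the following property. Let E be a complex Hilbert space, let f : [0,1] → E be continuously differentiable, let S : [0,1] → (continuous linear endomorphisms of E) be continuously differentiable with S(t) self-adjoint for every t, let A : [0,1] → (continuous linear endomorphisms of E) be continuous with A(t) skew-adjoint for every t, and let M₀, M₁ ≥ 0 be reals. Assume: (i) ‖f'(t) − S(t)(f(t)) − A(t)(f(t))‖ ≤ M₁·‖f(t)‖ for all t ∈ [0,1]; (ii) Re⟪S'(t)(v) + (S(t)∘A(t) − A(t)∘S(t))(v), v⟫ ≥ −M₀·‖v‖² for all t ∈ [0,1] and all v ∈ E. Then for every t ∈ [0,1], ‖f(t)‖² ≤ exp(N·(M₀ + M₁ + M₁²)) · ‖f(0)‖^{2(1−t)} · ‖f(1)‖^{2t}. -/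

import Mathlib

open scoped InnerProductSpace

private lemma re_inner_comm' {E : Type} [NormedAddCommGroup E] [InnerProductSpace ℂ E]
    (x y : E) : (⟪x, y⟫_ℂ).re = (⟪y, x⟫_ℂ).re := by
  have := inner_re_symm (𝕜 := ℂ) x y
  simpa using this

private lemma re_inner_self' {E : Type} [NormedAddCommGroup E] [InnerProductSpace ℂ E]
    (x : E) : (⟪x, x⟫_ℂ).re = ‖x‖ ^ 2 := by
  have := inner_self_eq_norm_sq (𝕜 := ℂ) x
  simpa using this

private lemma neg_norm_le_re_inner {E : Type} [NormedAddCommGroup E] [InnerProductSpace ℂ E]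
    (x y : E) : -(‖x‖ * ‖y‖) ≤ (⟪x, y⟫_ℂ).re := by
  have h1 : |(⟪x, y⟫_ℂ).re| ≤ ‖⟪x, y⟫_ℂ‖ := Complex.abs_re_le_norm _
  have h2 := norm_inner_le_norm (𝕜 := ℂ) x y
  have := neg_abs_le (⟪x, y⟫_ℂ).re
  linarith

private lemma abs_re_inner_le {E : Type} [NormedAddCommGroup E] [InnerProductSpace ℂ E]
    (x y : E) : |(⟪x, y⟫_ℂ).re| ≤ ‖x‖ * ‖y‖ := by
  have h1 : |(⟪x, y⟫_ℂ).re| ≤ ‖⟪x, y⟫_ℂ‖ := Complex.abs_re_le_norm _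
  have h2 := norm_inner_le_norm (𝕜 := ℂ) x y
  linarith

private lemma hasDerivWithinAt_re {u : ℝ → ℂ} {u' : ℂ} {s : Set ℝ} {x : ℝ}
    (h : HasDerivWithinAt u u' s x) :
    HasDerivWithinAt (fun t => (u t).re) u'.re s x := by
  simpa [Function.comp_def] using (Complex.reCLM.hasFDerivAt.comp_hasDerivWithinAt x h)

private lemma hasDerivWithinAt_poly (a b : ℝ) (s : ℝ) (SS : Set ℝ) :
    HasDerivWithinAt (fun y => a * y ^ 2 + b * y) (2 * a * s + b) SS s := by
  have h1 : HasDerivAt (fun y : ℝ => a * y ^ 2 + b * y) (a * (2 * s ^ 1) + b * 1) s :=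
    ((hasDerivAt_pow 2 s).const_mul a).add ((hasDerivAt_id s).const_mul b)
  have h2 : a * (2 * s ^ 1) + b * 1 = 2 * a * s + b := by ring
  rw [h2] at h1
  exact h1.hasDerivWithinAt

private lemma hasDerivWithinAt_clm_apply_complex {E : Type} [NormedAddCommGroup E]
    [InnerProductSpace ℂ E] {S : ℝ → E →L[ℂ] E} {S' : E →L[ℂ] E} {f : ℝ → E} {v : E}
    {s : Set ℝ} {x : ℝ}
    (hS : HasDerivWithinAt S S' s x) (hf : HasDerivWithinAt f v s x) :
    HasDerivWithinAt (fun τ => S τ (f τ)) (S' (f x) + S x v) s x := by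
  have h1 : HasDerivWithinAt (fun τ => (S τ).restrictScalars ℝ)
      (S'.restrictScalars ℝ) s x := by
    have := (ContinuousLinearMap.restrictScalarsL ℂ E E ℝ ℝ).hasFDerivAt.comp_hasDerivWithinAt
      x hS
    simpa [Function.comp_def] using this
  exact h1.clm_apply hf

private lemma ekpv_key {E : Type} [NormedAddCommGroup E] [InnerProductSpace ℂ E]
    (v v' sv av s'v : E) (M₀ M₁ : ℝ) (hM₁ : 0 ≤ M₁)
    (hcoer : -(M₀ * ‖v‖ ^ 2) ≤ (⟪s'v, v⟫_ℂ).re + 2 * (⟪sv, av⟫_ℂ).re)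
    (hA0 : (⟪av, v⟫_ℂ).re = 0)
    (hG : ‖v' - sv - av‖ ≤ M₁ * ‖v‖) :
    -((M₀ + M₁ ^ 2) * (‖v‖ ^ 2) ^ 2) ≤
      ((⟪s'v, v⟫_ℂ).re + 2 * (⟪sv, v'⟫_ℂ).re) * ‖v‖ ^ 2
        - (⟪sv, v⟫_ℂ).re * (2 * (⟪v, v'⟫_ℂ).re) := by
  rcases eq_or_ne v 0 with rfl | hv
  · simp
  have hH : (0:ℝ) < ‖v‖ ^ 2 := by
    have : 0 < ‖v‖ := norm_pos_iff.mpr hv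
    positivity
  set G : E := v' - sv - av with hGdef
  set H : ℝ := ‖v‖ ^ 2 with hHdef
  set D : ℝ := (⟪sv, v⟫_ℂ).re with hDdef
  set u : E := (H : ℂ) • sv - (D : ℂ) • v with hudef
  have hv' : v' = sv + av + G := by rw [hGdef]; abel
  have e1 : (⟪sv, v'⟫_ℂ).re = ‖sv‖ ^ 2 + (⟪sv, av⟫_ℂ).re + (⟪sv, G⟫_ℂ).re := by
    rw [hv']
    simp [inner_add_right, re_inner_self']
    rw [← Complex.ofReal_pow, Complex.ofReal_re]
  have e2 : (⟪v, v'⟫_ℂ).re = D + (⟪v, G⟫_ℂ).re := by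
    rw [hv']
    simp [inner_add_right, re_inner_comm' v sv, re_inner_comm' v av, hA0, hDdef]
  have e3 : ‖u‖ ^ 2 = H ^ 2 * ‖sv‖ ^ 2 - H * D ^ 2 := by
    have hns := norm_sub_sq (𝕜 := ℂ) ((H : ℂ) • sv) ((D : ℂ) • v)
    simp only [← hudef] at hns
    have h1 : ‖(H : ℂ) • sv‖ = H * ‖sv‖ := by
      rw [norm_smul]; simp [abs_of_nonneg hH.le]
    have h2 : ‖(D : ℂ) • v‖ ^ 2 = D ^ 2 * ‖v‖ ^ 2 := by
      rw [norm_smul, mul_pow, Complex.norm_real]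
      rw [Real.norm_eq_abs, sq_abs]
    have h3 : (RCLike.re ⟪(H : ℂ) • sv, (D : ℂ) • v⟫_ℂ : ℝ) = H * D * D := by
      rw [inner_smul_left, inner_smul_right, Complex.conj_ofReal]
      have : ((H : ℂ) * ((D : ℂ) * ⟪sv, v⟫_ℂ)).re = H * (D * (⟪sv, v⟫_ℂ).re) := by
        rw [Complex.re_ofReal_mul, Complex.re_ofReal_mul]
      simp only [RCLike.re_to_complex]
      rw [this, ← hDdef]
      ring
    rw [h1, h2, h3] at hns
    rw [hns, ← hHdef]
    ring
  have e4 : (⟪u, G⟫_ℂ).re = H * (⟪sv, G⟫_ℂ).re - D * (⟪v, G⟫_ℂ).re := by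
    rw [hudef, inner_sub_left, inner_smul_left, inner_smul_left, Complex.conj_ofReal,
      Complex.conj_ofReal, Complex.sub_re, Complex.re_ofReal_mul, Complex.re_ofReal_mul]
  have e5 : -(‖u‖ * (M₁ * ‖v‖)) ≤ (⟪u, G⟫_ℂ).re := by
    have h1 := neg_norm_le_re_inner u G
    have h2 : ‖u‖ * ‖G‖ ≤ ‖u‖ * (M₁ * ‖v‖) :=
      mul_le_mul_of_nonneg_left hG (norm_nonneg u)
    linarith
  have hP : 0 ≤ H * ‖sv‖ ^ 2 - D ^ 2 := by
    nlinarith [e3, sq_nonneg ‖u‖, hH]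
  have hfact : ((H * ‖sv‖ ^ 2 - D ^ 2) + M₁ ^ 2 * H ^ 2 - 2 * (‖u‖ * (M₁ * ‖v‖))) * H
      = (‖u‖ - M₁ * ‖v‖ * H) ^ 2 := by
    linear_combination (-1 : ℝ) * e3 + M₁ ^ 2 * H ^ 2 * hHdef
  have key : 2 * (‖u‖ * (M₁ * ‖v‖)) ≤ (H * ‖sv‖ ^ 2 - D ^ 2) + M₁ ^ 2 * H ^ 2 := by
    have h0 : 0 ≤ ((H * ‖sv‖ ^ 2 - D ^ 2) + M₁ ^ 2 * H ^ 2 - 2 * (‖u‖ * (M₁ * ‖v‖))) * H := by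
      rw [hfact]; positivity
    nlinarith [h0, hH]
  rw [e1, e2]
  nlinarith [e5, e4, key, hP, mul_le_mul_of_nonneg_right hcoer hH.le]


set_option maxHeartbeats 1000000 in
/-- **Abstract logarithmic convexity** (Hilbert-space form of the
Escauriaza–Kenig–Ponce–Vega lemma).  There is a universal constant `N ≥ 0`
such that: for any complex Hilbert space `E`, any `C¹` function
`f : [0,1] → E` (derivative `f'`), any `C¹` family `S` of self-adjoint
bounded operators (derivative `S'`), any continuous family `A` of
skew-adjoint bounded operators and `M₀, M₁ ≥ 0` satisfying
`‖f' t - S t (f t) - A t (f t)‖ ≤ M₁ ‖f t‖` and the coercivity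
`Re ⟪S' t v + [S t, A t] v, v⟫ ≥ -M₀ ‖v‖²`, one has for all `t ∈ [0,1]`
`‖f t‖² ≤ exp (N (M₀ + M₁ + M₁²)) ‖f 0‖^{2(1-t)} ‖f 1‖^{2t}`. -/
theorem abstract_logarithmic_convexity :
    ∃ N : ℝ, 0 ≤ N ∧
      ∀ (E : Type) [NormedAddCommGroup E] [InnerProductSpace ℂ E] [CompleteSpace E]
        (f f' : ℝ → E) (S S' A : ℝ → E →L[ℂ] E) (M₀ M₁ : ℝ),
        0 ≤ M₀ → 0 ≤ M₁ →
        (∀ t ∈ Set.Icc (0 : ℝ) 1, HasDerivWithinAt f (f' t) (Set.Icc (0 : ℝ) 1) t) →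
        ContinuousOn f' (Set.Icc (0 : ℝ) 1) →
        (∀ t ∈ Set.Icc (0 : ℝ) 1, HasDerivWithinAt S (S' t) (Set.Icc (0 : ℝ) 1) t) →
        ContinuousOn S' (Set.Icc (0 : ℝ) 1) →
        (∀ t ∈ Set.Icc (0 : ℝ) 1, ∀ v w : E, ⟪S t v, w⟫_ℂ = ⟪v, S t w⟫_ℂ) →
        ContinuousOn A (Set.Icc (0 : ℝ) 1) →
        (∀ t ∈ Set.Icc (0 : ℝ) 1, ∀ v w : E, ⟪A t v, w⟫_ℂ = -⟪v, A t w⟫_ℂ) →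
        (∀ t ∈ Set.Icc (0 : ℝ) 1, ‖f' t - S t (f t) - A t (f t)‖ ≤ M₁ * ‖f t‖) →
        (∀ t ∈ Set.Icc (0 : ℝ) 1, ∀ v : E,
          (⟪S' t v + (S t (A t v) - A t (S t v)), v⟫_ℂ).re ≥ -M₀ * ‖v‖ ^ 2) →
        ∀ t ∈ Set.Icc (0 : ℝ) 1,
          ‖f t‖ ^ 2 ≤ Real.exp (N * (M₀ + M₁ + M₁ ^ 2)) *
            ‖f 0‖ ^ (2 * (1 - t)) * ‖f 1‖ ^ (2 * t) := by
  refine ⟨1, zero_le_one, ?_⟩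
  intro E _ _ _ f f' S S' A M₀ M₁ hM₀ hM₁ hf hf'c hS hS'c hSsym hAc hAskew hGb hcoer
  have h0I : (0 : ℝ) ∈ Set.Icc (0:ℝ) 1 := ⟨le_refl 0, zero_le_one⟩
  have h1I : (1 : ℝ) ∈ Set.Icc (0:ℝ) 1 := ⟨zero_le_one, le_refl 1⟩
  set H : ℝ → ℝ := fun s => ‖f s‖ ^ 2 with hHdef
  set dH : ℝ → ℝ := fun s => 2 * (⟪f s, f' s⟫_ℂ).re with hdHdef
  have hHd : ∀ s ∈ Set.Icc (0:ℝ) 1, HasDerivWithinAt H (dH s) (Set.Icc (0:ℝ) 1) s := by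
    intro s hs
    have h1 := HasDerivWithinAt.inner ℂ (hf s hs) (hf s hs)
    have h2 := hasDerivWithinAt_re h1
    have h3 : (⟪f s, f' s⟫_ℂ + ⟪f' s, f s⟫_ℂ).re = dH s := by
      rw [Complex.add_re, re_inner_comm' (f' s) (f s), hdHdef]; ring
    rw [h3] at h2
    exact h2.congr (fun y _ => (re_inner_self' (f y)).symm) (re_inner_self' (f s)).symm
  by_cases hzero : ∃ t₀ ∈ Set.Icc (0:ℝ) 1, f t₀ = 0
  · -- degenerate case : f vanishes somewhere hence everywhere
    obtain ⟨t₀, ht₀, hft₀⟩ := hzero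
    have hScont : ContinuousOn S (Set.Icc (0:ℝ) 1) := fun s hs => (hS s hs).continuousWithinAt
    obtain ⟨Cs, hCs⟩ := isCompact_Icc.exists_bound_of_continuousOn hScont
    obtain ⟨Ca, hCa⟩ := isCompact_Icc.exists_bound_of_continuousOn hAc
    set K : ℝ := M₁ + Cs + Ca with hKdef
    have hfb : ∀ s ∈ Set.Icc (0:ℝ) 1, ‖f' s‖ ≤ K * ‖f s‖ := by
      intro s hs
      have h1 : f' s = (f' s - S s (f s) - A s (f s)) + S s (f s) + A s (f s) := by abel
      have h2 : ‖S s (f s)‖ ≤ Cs * ‖f s‖ :=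
        le_trans ((S s).le_opNorm (f s)) (mul_le_mul_of_nonneg_right (hCs s hs) (norm_nonneg _))
      have h3 : ‖A s (f s)‖ ≤ Ca * ‖f s‖ :=
        le_trans ((A s).le_opNorm (f s)) (mul_le_mul_of_nonneg_right (hCa s hs) (norm_nonneg _))
      have h4 := hGb s hs
      calc ‖f' s‖ = ‖(f' s - S s (f s) - A s (f s)) + S s (f s) + A s (f s)‖ := by rw [← h1]
        _ ≤ ‖(f' s - S s (f s) - A s (f s)) + S s (f s)‖ + ‖A s (f s)‖ := norm_add_le _ _
        _ ≤ ‖f' s - S s (f s) - A s (f s)‖ + ‖S s (f s)‖ + ‖A s (f s)‖ := by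
              have := norm_add_le (f' s - S s (f s) - A s (f s)) (S s (f s)); linarith
        _ ≤ M₁ * ‖f s‖ + Cs * ‖f s‖ + Ca * ‖f s‖ := by linarith
        _ = K * ‖f s‖ := by rw [hKdef]; ring
    have hdHball : ∀ s ∈ Set.Icc (0:ℝ) 1, |dH s| ≤ 2 * K * H s := by
      intro s hs
      have h1 := abs_re_inner_le (f s) (f' s)
      have h2 : ‖f s‖ * ‖f' s‖ ≤ ‖f s‖ * (K * ‖f s‖) :=
        mul_le_mul_of_nonneg_left (hfb s hs) (norm_nonneg _)
      have h3 : |dH s| = 2 * |(⟪f s, f' s⟫_ℂ).re| := by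
        rw [hdHdef]; rw [abs_mul]; norm_num
      have h4 : H s = ‖f s‖ ^ 2 := rfl
      rw [h3, h4]
      nlinarith [h1, h2]
    have hexp : ∀ (c : ℝ) (s : ℝ),
        HasDerivAt (fun y : ℝ => Real.exp (c * y)) (c * Real.exp (c * s)) s := by
      intro c s
      have := (Real.hasDerivAt_exp (c * s)).comp s ((hasDerivAt_id s).const_mul c)
      simpa [mul_comm, Function.comp_def] using this
    have hH0 : H t₀ = 0 := by
      have : H t₀ = ‖f t₀‖ ^ 2 := rfl
      rw [this, hft₀]; simp
    have hHnn : ∀ s, 0 ≤ H s := by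
      intro s
      have : H s = ‖f s‖ ^ 2 := rfl
      rw [this]; positivity
    have key : ∀ s ∈ Set.Icc (0:ℝ) 1, f s = 0 := by
      intro s hs
      have hfin : H s ≤ 0 → f s = 0 := by
        intro h
        have h5 : ‖f s‖ ^ 2 = 0 := le_antisymm h (by positivity)
        have h6 : ‖f s‖ = 0 := by nlinarith [norm_nonneg (f s)]
        exact norm_eq_zero.mp h6
      rcases le_total s t₀ with hle | hle
      · have hq : ∀ x ∈ Set.Icc (0:ℝ) 1, HasDerivWithinAt (fun y => Real.exp (2*K*y) * H y)
            (2*K*Real.exp (2*K*x) * H x + Real.exp (2*K*x) * dH x) (Set.Icc (0:ℝ) 1) x := by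
          intro x hx
          exact ((hexp (2*K) x).hasDerivWithinAt (s := Set.Icc (0:ℝ) 1)).mul (hHd x hx)
        have hmono : MonotoneOn (fun y => Real.exp (2*K*y) * H y) (Set.Icc (0:ℝ) 1) := by
          apply monotoneOn_of_hasDerivWithinAt_nonneg (convex_Icc 0 1)
            (fun x hx => (hq x hx).continuousWithinAt)
            (fun x hx => (hq x (interior_subset hx)).mono interior_subset)
          intro x hx
          have hx' : x ∈ Set.Icc (0:ℝ) 1 := interior_subset hx
          have h6 := abs_le.mp (hdHball x hx')
          have h7 : 0 ≤ Real.exp (2*K*x) * (2*K*H x + dH x) :=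
            mul_nonneg (Real.exp_pos _).le (by linarith [h6.1])
          nlinarith [h7]
        have h4 := hmono hs ht₀ hle
        simp only [hH0, mul_zero] at h4
        have he : 0 < Real.exp (2*K*s) := Real.exp_pos _
        exact hfin (by nlinarith [h4, he, hHnn s])
      · have hq : ∀ x ∈ Set.Icc (0:ℝ) 1, HasDerivWithinAt (fun y => Real.exp (-(2*K)*y) * H y)
            (-(2*K)*Real.exp (-(2*K)*x) * H x + Real.exp (-(2*K)*x) * dH x) (Set.Icc (0:ℝ) 1) x := by
          intro x hx
          exact ((hexp (-(2*K)) x).hasDerivWithinAt (s := Set.Icc (0:ℝ) 1)).mul (hHd x hx)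
        have hmono : AntitoneOn (fun y => Real.exp (-(2*K)*y) * H y) (Set.Icc (0:ℝ) 1) := by
          apply antitoneOn_of_hasDerivWithinAt_nonpos (convex_Icc 0 1)
            (fun x hx => (hq x hx).continuousWithinAt)
            (fun x hx => (hq x (interior_subset hx)).mono interior_subset)
          intro x hx
          have hx' : x ∈ Set.Icc (0:ℝ) 1 := interior_subset hx
          have h6 := abs_le.mp (hdHball x hx')
          have h7 : Real.exp (-(2*K)*x) * (dH x - 2*K*H x) ≤ 0 :=
            mul_nonpos_of_nonneg_of_nonpos (Real.exp_pos _).le (by linarith [h6.2])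
          nlinarith [h7]
        have h4 := hmono ht₀ hs hle
        simp only [hH0, mul_zero] at h4
        have he : 0 < Real.exp (-(2*K)*s) := Real.exp_pos _
        exact hfin (by nlinarith [h4, he, hHnn s])
    intro t ht
    rw [key t ht]
    simp only [norm_zero]
    rw [zero_pow (by norm_num : (2:ℕ) ≠ 0)]
    positivity
  · -- main case : f never vanishes
    push_neg at hzero
    have hHpos : ∀ s ∈ Set.Icc (0:ℝ) 1, 0 < H s := by
      intro s hs
      have h1 : 0 < ‖f s‖ := norm_pos_iff.mpr (hzero s hs)
      show (0:ℝ) < ‖f s‖ ^ 2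
      positivity
    set D : ℝ → ℝ := fun s => (⟪S s (f s), f s⟫_ℂ).re with hDdef
    set dD : ℝ → ℝ := fun s =>
      (⟪S' s (f s), f s⟫_ℂ).re + 2 * (⟪S s (f s), f' s⟫_ℂ).re with hdDdef
    have hDd : ∀ s ∈ Set.Icc (0:ℝ) 1, HasDerivWithinAt D (dD s) (Set.Icc (0:ℝ) 1) s := by
      intro s hs
      have hSf : HasDerivWithinAt (fun τ => S τ (f τ)) (S' s (f s) + S s (f' s))
          (Set.Icc (0:ℝ) 1) s := hasDerivWithinAt_clm_apply_complex (hS s hs) (hf s hs)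
      have h1 := HasDerivWithinAt.inner ℂ hSf (hf s hs)
      have h2 := hasDerivWithinAt_re h1
      have h3 : (⟪S s (f s), f' s⟫_ℂ + ⟪S' s (f s) + S s (f' s), f s⟫_ℂ).re = dD s := by
        rw [inner_add_left]
        have h4 : (⟪S s (f' s), f s⟫_ℂ).re = (⟪S s (f s), f' s⟫_ℂ).re := by
          rw [hSsym s hs (f' s) (f s), re_inner_comm']
        simp only [Complex.add_re]
        rw [h4, hdDdef]
        ring
      rw [h3] at h2
      exact h2
    set C : ℝ := M₀ + M₁ ^ 2 with hCdef
    have hC0 : 0 ≤ C := by rw [hCdef]; positivity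
    set φ : ℝ → ℝ := fun s => D s / H s + C * s with hφdef
    have hφd : ∀ s ∈ Set.Icc (0:ℝ) 1, HasDerivWithinAt φ
        ((dD s * H s - D s * dH s) / (H s) ^ 2 + C) (Set.Icc (0:ℝ) 1) s := by
      intro s hs
      have h1 := (hDd s hs).div (hHd s hs) (ne_of_gt (hHpos s hs))
      have h2 : HasDerivWithinAt (fun y : ℝ => C * y) C (Set.Icc (0:ℝ) 1) s := by
        simpa using (hasDerivWithinAt_id s (Set.Icc (0:ℝ) 1)).const_mul C
      exact h1.add h2
    have hco : ∀ s ∈ Set.Icc (0:ℝ) 1,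
        -(M₀ * ‖f s‖ ^ 2) ≤ (⟪S' s (f s), f s⟫_ℂ).re
          + 2 * (⟪S s (f s), A s (f s)⟫_ℂ).re := by
      intro s hs
      have h1 := hcoer s hs (f s)
      have h2 : (⟪S s (A s (f s)), f s⟫_ℂ).re = (⟪S s (f s), A s (f s)⟫_ℂ).re := by
        rw [hSsym s hs (A s (f s)) (f s), re_inner_comm']
      have h3 : (⟪A s (S s (f s)), f s⟫_ℂ).re = -(⟪S s (f s), A s (f s)⟫_ℂ).re := by
        rw [hAskew s hs (S s (f s)) (f s)]; simp
      rw [inner_add_left, inner_sub_left] at h1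
      simp only [Complex.add_re, Complex.sub_re] at h1
      rw [h2, h3] at h1
      linarith
    have hA0 : ∀ s ∈ Set.Icc (0:ℝ) 1, (⟪A s (f s), f s⟫_ℂ).re = 0 := by
      intro s hs
      have h1 := hAskew s hs (f s) (f s)
      have h2 : (⟪A s (f s), f s⟫_ℂ).re = -(⟪f s, A s (f s)⟫_ℂ).re := by rw [h1]; simp
      have h3 := re_inner_comm' (f s) (A s (f s))
      linarith
    have hdφ0 : ∀ s ∈ Set.Icc (0:ℝ) 1,
        0 ≤ (dD s * H s - D s * dH s) / (H s) ^ 2 + C := by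
      intro s hs
      have hk := ekpv_key (f s) (f' s) (S s (f s)) (A s (f s)) (S' s (f s)) M₀ M₁ hM₁
        (hco s hs) (hA0 s hs) (hGb s hs)
      have hH2 : (0:ℝ) < (H s) ^ 2 := pow_pos (hHpos s hs) 2
      have hk' : -(C * (H s) ^ 2) ≤ dD s * H s - D s * dH s := hk
      have h5 : -C ≤ (dD s * H s - D s * dH s) / (H s) ^ 2 := by
        rw [le_div_iff₀ hH2]
        linarith
      linarith
    have hφmono : MonotoneOn φ (Set.Icc (0:ℝ) 1) :=
      monotoneOn_of_hasDerivWithinAt_nonneg (convex_Icc 0 1)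
        (fun s hs => (hφd s hs).continuousWithinAt)
        (fun x hx => (hφd x (interior_subset hx)).mono interior_subset)
        (fun x hx => hdφ0 x (interior_subset hx))
    set L : ℝ → ℝ := fun s => Real.log (H s) with hLdef
    have hLd : ∀ s ∈ Set.Icc (0:ℝ) 1, HasDerivWithinAt L (dH s / H s) (Set.Icc (0:ℝ) 1) s :=
      fun s hs => (hHd s hs).log (ne_of_gt (hHpos s hs))
    have hdHb : ∀ s ∈ Set.Icc (0:ℝ) 1, |dH s - 2 * D s| ≤ 2 * M₁ * H s := by
      intro s hs
      have hv' : f' s = (f' s - S s (f s) - A s (f s)) + S s (f s) + A s (f s) := by abel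
      have e : (⟪f s, f' s⟫_ℂ).re
          = (⟪f s, f' s - S s (f s) - A s (f s)⟫_ℂ).re + D s := by
        conv_lhs => rw [hv']
        rw [inner_add_right, inner_add_right]
        simp only [Complex.add_re]
        rw [re_inner_comm' (f s) (S s (f s)), re_inner_comm' (f s) (A s (f s)), hA0 s hs]
        rw [hDdef]
        ring
      have h1 := abs_re_inner_le (f s) (f' s - S s (f s) - A s (f s))
      have h2 : ‖f s‖ * ‖f' s - S s (f s) - A s (f s)‖ ≤ ‖f s‖ * (M₁ * ‖f s‖) :=
        mul_le_mul_of_nonneg_left (hGb s hs) (norm_nonneg _)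
      have h3 : dH s - 2 * D s = 2 * (⟪f s, f' s - S s (f s) - A s (f s)⟫_ℂ).re := by
        have h4 : dH s = 2 * (⟪f s, f' s⟫_ℂ).re := rfl
        rw [h4, e]; ring
      have h5 : H s = ‖f s‖ ^ 2 := rfl
      rw [h3, h5, abs_mul]
      have h6 : |(2:ℝ)| = 2 := by norm_num
      rw [h6]
      have h7 := abs_nonneg ((⟪f s, f' s - S s (f s) - A s (f s)⟫_ℂ).re)
      nlinarith [h1, h2]
    intro t ht
    obtain ⟨ht0, ht1⟩ := ht
    have htI : t ∈ Set.Icc (0:ℝ) 1 := ⟨ht0, ht1⟩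
    have hsub1 : Set.Icc (0:ℝ) t ⊆ Set.Icc (0:ℝ) 1 := Set.Icc_subset_Icc_right ht1
    have hsub2 : Set.Icc t 1 ⊆ Set.Icc (0:ℝ) 1 := Set.Icc_subset_Icc_left ht0
    -- g₁ antitone on [0, t]
    have hg1d : ∀ x ∈ Set.Icc (0:ℝ) t,
        HasDerivWithinAt (fun y => L y + (C * y^2 + (-(2*φ t) - 2*M₁) * y))
          (dH x / H x + (2*C*x + (-(2*φ t) - 2*M₁))) (Set.Icc (0:ℝ) t) x :=
      fun x hx => ((hLd x (hsub1 hx)).mono hsub1).add (hasDerivWithinAt_poly C _ x _)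
    have hg1anti : AntitoneOn (fun y => L y + (C * y^2 + (-(2*φ t) - 2*M₁) * y))
        (Set.Icc (0:ℝ) t) := by
      apply antitoneOn_of_hasDerivWithinAt_nonpos (convex_Icc 0 t)
        (fun x hx => (hg1d x hx).continuousWithinAt)
        (fun x hx => (hg1d x (interior_subset hx)).mono interior_subset)
      intro x hx
      have hx' : x ∈ Set.Icc (0:ℝ) t := interior_subset hx
      have hxI : x ∈ Set.Icc (0:ℝ) 1 := hsub1 hx'
      have hb := abs_le.mp (hdHb x hxI)
      have hHp := hHpos x hxI
      have h1 : dH x / H x ≤ 2 * (D x / H x) + 2*M₁ := by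
        have e' : 2 * (D x / H x) + 2*M₁ = (2 * D x + 2*M₁*(H x))/(H x) := by
          field_simp; try ring
        rw [e', div_le_div_iff₀ hHp hHp]
        nlinarith [hb.2, hHp]
      have h2 : φ x ≤ φ t := hφmono hxI htI hx'.2
      have h3 : φ x = D x / H x + C * x := rfl
      rw [h3] at h2
      linarith
    -- g₂ monotone on [t, 1]
    have hg2d : ∀ x ∈ Set.Icc t 1,
        HasDerivWithinAt (fun y => L y + (C * y^2 + (-(2*φ t) + 2*M₁) * y))
          (dH x / H x + (2*C*x + (-(2*φ t) + 2*M₁))) (Set.Icc t 1) x :=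
      fun x hx => ((hLd x (hsub2 hx)).mono hsub2).add (hasDerivWithinAt_poly C _ x _)
    have hg2mono : MonotoneOn (fun y => L y + (C * y^2 + (-(2*φ t) + 2*M₁) * y))
        (Set.Icc t 1) := by
      apply monotoneOn_of_hasDerivWithinAt_nonneg (convex_Icc t 1)
        (fun x hx => (hg2d x hx).continuousWithinAt)
        (fun x hx => (hg2d x (interior_subset hx)).mono interior_subset)
      intro x hx
      have hx' : x ∈ Set.Icc t 1 := interior_subset hx
      have hxI : x ∈ Set.Icc (0:ℝ) 1 := hsub2 hx'
      have hb := abs_le.mp (hdHb x hxI)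
      have hHp := hHpos x hxI
      have h1 : 2 * (D x / H x) - 2*M₁ ≤ dH x / H x := by
        have e' : 2 * (D x / H x) - 2*M₁ = (2 * D x - 2*M₁*(H x))/(H x) := by
          field_simp; try ring
        rw [e', div_le_div_iff₀ hHp hHp]
        nlinarith [hb.1, hHp]
      have h2 : φ t ≤ φ x := hφmono htI hxI hx'.1
      have h3 : φ x = D x / H x + C * x := rfl
      rw [h3] at h2
      linarith
    have E1 : L t + (C * t^2 + (-(2*φ t) - 2*M₁) * t) ≤ L 0 := by
      have h0m : (0:ℝ) ∈ Set.Icc (0:ℝ) t := Set.left_mem_Icc.mpr ht0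
      have htm : t ∈ Set.Icc (0:ℝ) t := Set.right_mem_Icc.mpr ht0
      have := hg1anti h0m htm ht0
      simpa using this
    have E2 : L t + (C * t^2 + (-(2*φ t) + 2*M₁) * t)
        ≤ L 1 + (C + (-(2*φ t) + 2*M₁)) := by
      have htm : t ∈ Set.Icc t 1 := Set.left_mem_Icc.mpr ht1
      have h1m : (1:ℝ) ∈ Set.Icc t 1 := Set.right_mem_Icc.mpr ht1
      have := hg2mono htm h1m ht1
      simpa using this
    have hsum : L t ≤ (1-t)*(L 0) + t*(L 1) + (M₀ + M₁ + M₁^2) := by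
      have h1 := mul_le_mul_of_nonneg_left E1 (by linarith : (0:ℝ) ≤ 1 - t)
      have h2 := mul_le_mul_of_nonneg_left E2 ht0
      have hCle : C = M₀ + M₁^2 := hCdef
      nlinarith [h1, h2, mul_nonneg hM₁ (sq_nonneg (2*t-1)),
        mul_nonneg hM₀ (sq_nonneg (2*t-1)),
        mul_nonneg (mul_nonneg hM₁ hM₁) (sq_nonneg (2*t-1))]
    -- convert to the stated form
    have hf0 : (0:ℝ) < ‖f 0‖ := norm_pos_iff.mpr (hzero 0 h0I)
    have hf1 : (0:ℝ) < ‖f 1‖ := norm_pos_iff.mpr (hzero 1 h1I)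
    have eL0 : L 0 = 2 * Real.log ‖f 0‖ := by
      have : L 0 = Real.log (‖f 0‖ ^ 2) := rfl
      rw [this, Real.log_pow]; norm_num
    have eL1 : L 1 = 2 * Real.log ‖f 1‖ := by
      have : L 1 = Real.log (‖f 1‖ ^ 2) := rfl
      rw [this, Real.log_pow]; norm_num
    have hr0 : ‖f 0‖ ^ (2*(1-t)) = Real.exp ((1-t) * (L 0)) := by
      rw [Real.rpow_def_of_pos hf0, eL0]; ring_nf
    have hr1 : ‖f 1‖ ^ (2*t) = Real.exp (t * (L 1)) := by
      rw [Real.rpow_def_of_pos hf1, eL1]; ring_nf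
    have hHt : ‖f t‖ ^ 2 = Real.exp (L t) := by
      have h1 : H t = ‖f t‖ ^ 2 := rfl
      have h2 : L t = Real.log (H t) := rfl
      rw [← h1, h2, Real.exp_log (hHpos t htI)]
    rw [hHt, hr0, hr1, ← Real.exp_add, ← Real.exp_add]
    apply Real.exp_le_exp.mpr
    nlinarith [hsum]
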